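/- Let N ≥ 1 and let {w_x}_{x∈X} be a unitary error basis for M_N(ℂ). Define V^{rs}_x := (1/N) · w_x^* e_{rs} w_x ∈ M_N(ℂ) for 1 ≤ r,s ≤ N and x ∈ X, where e_{rs} are the standard matrix units. Then for all admissible indices: (i) Σ_{t=1}^N V^{rt}_x V^{ts}_y = δ_{xy} V^{rs}_x; (ii) V^{ji}_x V^{sr}_x = δ_{is} (1/N) V^{jr}_x; (iii) (V^{ij}_x)^* = V^{ji}_x; (iv) N · Σ_{i=1}^N V^{ii}_x = 1; (v) Σ_{x∈X} V^{ij}_x = δ_{ij} · 1. (These are exactly the defining relations of the linking algebra of the quantum isomorphism between the quantum graphs on ℂ^{N²} and on M_N(ℂ), so the V^{rs}_x determine a unital *-representation of that linking algebra on M_N(ℂ).) -/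

import Mathlib

open scoped Matrix

private lemma std_sandwich {N : ℕ} (r s : Fin N) (A : Matrix (Fin N) (Fin N) ℂ) :
    ∑ t, Matrix.single r t (1:ℂ) * A * Matrix.single t s 1
      = A.trace • Matrix.single r s 1 := by
  ext p q
  simp [Matrix.sum_apply, Matrix.mul_apply, Matrix.single, Matrix.trace,
    Matrix.diag, ite_and, Finset.mul_sum, Finset.sum_ite_eq, Finset.sum_ite_eq',
    mul_comm]
  split_ifs <;> simp

private lemma std_sum_diag {N : ℕ} :
    ∑ i : Fin N, Matrix.single i i (1:ℂ) = 1 := by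
  ext p q
  simp [Matrix.sum_apply, Matrix.single, Matrix.one_apply, ite_and, eq_comm]

theorem statement_4 (N : ℕ) (hN : 1 ≤ N) (X : Type*) [Fintype X] [DecidableEq X]
    (hX : Fintype.card X = N ^ 2)
    -- a unitary error basis {w_x} for M_N(ℂ)
    (w : X → Matrix (Fin N) (Fin N) ℂ)
    (hunit : ∀ x, (w x)ᴴ * w x = 1)
    (horth : ∀ x y, (N : ℂ)⁻¹ * Matrix.trace ((w x)ᴴ * w y) = if x = y then 1 else 0)
    -- the elements V^{rs}_x = (1/N) w_x^* e_{rs} w_x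
    (V : Fin N → Fin N → X → Matrix (Fin N) (Fin N) ℂ)
    (hV : ∀ r s x, V r s x = (N : ℂ)⁻¹ • ((w x)ᴴ * Matrix.single r s 1 * w x)) :
    (∀ (r s : Fin N) (x y : X),
        ∑ t, V r t x * V t s y = if x = y then V r s x else 0) ∧
    (∀ (i j r s : Fin N) (x : X),
        V j i x * V s r x = if i = s then (N : ℂ)⁻¹ • V j r x else 0) ∧
    (∀ (i j : Fin N) (x : X), (V i j x)ᴴ = V j i x) ∧
    (∀ x : X, (N : ℂ) • ∑ i, V i i x = 1) ∧
    (∀ i j : Fin N, ∑ x, V i j x = if i = j then 1 else 0) := by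
  have hN0 : (N : ℂ) ≠ 0 := Nat.cast_ne_zero.mpr (Nat.one_le_iff_ne_zero.mp hN)
  have hunit' : ∀ x, w x * (w x)ᴴ = 1 := fun x =>
    mul_eq_one_comm.mp (hunit x)
  have htrace : ∀ x y, Matrix.trace ((w x)ᴴ * w y)
      = if x = y then (N : ℂ) else 0 := by
    intro x y
    have h := horth x y
    have h2 := congrArg (fun z => (N : ℂ) * z) h
    simp only [← mul_assoc, mul_inv_cancel₀ hN0, one_mul] at h2
    rw [h2]
    split <;> simp
  refine ⟨?_, ?_, ?_, ?_, ?_⟩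
  · -- (i)
    intro r s x y
    have key : ∑ t, V r t x * V t s y
        = (N:ℂ)⁻¹ • ((N:ℂ)⁻¹ • ((w x)ᴴ *
          (∑ t, Matrix.single r t 1 * (w x * (w y)ᴴ) * Matrix.single t s 1)
          * w y)) := by
      simp only [hV, Matrix.smul_mul, Matrix.mul_smul, Finset.smul_sum,
        Matrix.mul_sum, Matrix.sum_mul]
      congr 1
      funext t
      congr 2
      noncomm_ring
    rw [key, std_sandwich]
    have htr : (w x * (w y)ᴴ).trace = if x = y then (N:ℂ) else 0 := by
      rw [Matrix.trace_mul_comm, htrace y x]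
      simp [eq_comm]
    rw [htr]
    split
    · subst ‹x = y›
      rw [hV]
      simp only [Matrix.mul_smul, Matrix.smul_mul, smul_smul]
      congr 1
      field_simp
    · simp
  · -- (ii)
    intro i j r s x
    have key : V j i x * V s r x
        = (N:ℂ)⁻¹ • ((N:ℂ)⁻¹ • ((w x)ᴴ *
            (Matrix.single j i 1 * Matrix.single s r 1) * w x)) := by
      simp only [hV, Matrix.smul_mul, Matrix.mul_smul]
      congr 2
      have : (w x)ᴴ * Matrix.single j i 1 * w x *
            ((w x)ᴴ * Matrix.single s r 1 * w x)
          = (w x)ᴴ * Matrix.single j i 1 * (w x * (w x)ᴴ) *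
            Matrix.single s r 1 * w x := by noncomm_ring
      rw [this, hunit' x]
      noncomm_ring
    rw [key]
    by_cases his : i = s
    · subst his
      rw [Matrix.single_mul_single_same, one_mul, if_pos rfl, hV]
    · rw [Matrix.single_mul_single_of_ne (h := his), if_neg his]
      simp
  · -- (iii)
    intro i j x
    have hstd : (Matrix.single i j (1:ℂ))ᴴ = Matrix.single j i 1 := by
      ext p q
      simp [Matrix.conjTranspose_apply, Matrix.single, and_comm]
    simp [hV, Matrix.conjTranspose_smul, Matrix.conjTranspose_mul, mul_assoc, hstd]
  · -- (iv)
    intro x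
    have hsum : ∑ i, V i i x
        = (N:ℂ)⁻¹ • ((w x)ᴴ * (∑ i, Matrix.single i i 1) * w x) := by
      simp only [hV, ← Finset.smul_sum]
      congr 1
      rw [Matrix.mul_sum, Matrix.sum_mul]
    rw [hsum, std_sum_diag, Matrix.mul_one, hunit x, smul_smul,
      mul_inv_cancel₀ hN0, one_smul]
  · -- (v)
    intro i j
    -- completeness of the basis
    set U : Matrix X (Fin N × Fin N) ℂ := fun x p => w x p.1 p.2 with hU
    have hUU : U * ((N:ℂ)⁻¹ • Uᴴ) = 1 := by
      ext x y
      have h1 : (N:ℂ)⁻¹ * Matrix.trace ((w y)ᴴ * w x) = if x = y then 1 else 0 := by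
        rw [horth y x]
        simp [eq_comm]
      have h2 : Matrix.trace ((w y)ᴴ * w x)
          = ∑ p : Fin N × Fin N, star (w y p.1 p.2) * w x p.1 p.2 := by
        rw [Matrix.trace, Fintype.sum_prod_type, Finset.sum_comm]
        simp [Matrix.diag, Matrix.mul_apply, Matrix.conjTranspose_apply]
      simp only [Matrix.mul_apply, Matrix.smul_apply, Matrix.conjTranspose_apply,
        Matrix.one_apply, smul_eq_mul, hU]
      rw [← h1, h2, Finset.mul_sum]
      exact Finset.sum_congr rfl fun p _ => by show w x p.1 p.2 * ((N:ℂ)⁻¹ * star (w y p.1 p.2)) = _; ring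
    have e : X ≃ Fin N × Fin N := Fintype.equivOfCardEq (by
      simp [hX, sq])
    have hcomm : ((N:ℂ)⁻¹ • Uᴴ) * U = 1 :=
      (Matrix.mul_eq_one_comm_of_equiv e).mp hUU
    have hcompl : ∀ a b c d : Fin N,
        (N:ℂ)⁻¹ * ∑ x, (starRingEnd ℂ) (w x a b) * w x c d
          = if a = c ∧ b = d then 1 else 0 := by
      intro a b c d
      have := congrFun (congrFun hcomm (a, b)) (c, d)
      simp only [Matrix.mul_apply, Matrix.smul_apply, Matrix.conjTranspose_apply,
        Matrix.one_apply, hU, Prod.mk.injEq] at this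
      rw [← this, Finset.mul_sum]
      refine Finset.sum_congr rfl fun x _ => ?_
      show _ = ((N:ℂ)⁻¹ * star (w x a b)) * w x c d
      simp only [smul_eq_mul, starRingEnd_apply]
      ring
    have hentry : ∀ x (k l : Fin N),
        ((w x)ᴴ * Matrix.single i j 1 * w x : Matrix (Fin N) (Fin N) ℂ) k l
          = (starRingEnd ℂ) (w x i k) * w x j l := by
      intro x k l
      simp [Matrix.mul_apply, Matrix.single, Matrix.conjTranspose_apply,
        ite_and, Finset.sum_ite_eq, Finset.mul_sum, mul_comm]
    ext k l
    simp only [Matrix.sum_apply, hV, Matrix.smul_apply, hentry, smul_eq_mul,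
      ← Finset.mul_sum]
    rw [hcompl i k j l]
    by_cases hij : i = j
    · subst hij
      simp [Matrix.one_apply]
    · simp [hij]
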